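/- Let Ω ⊆ ℝⁿ, n ≥ 1, δ ∈ (0, n], and 1 ≤ p < ∞. Then the functional ‖f‖ := ( ∫_Ω |f|^p dH^δ_∞ )^{1/p} is a quasi-norm on the space of (equivalence classes modulo equality H^δ_∞-almost everywhere of) functions f : Ω → [−∞, ∞] with ∫_Ω |f|^p dH^δ_∞ < ∞; in particular there exists a constant c ≥ 1 such that ‖f + g‖ ≤ c ‖f‖ + c ‖g‖ for all such f, g, and ‖f‖ = 0 if and only if f = 0 H^δ_∞-almost everywhere, and ‖a f‖ = |a| ‖f‖ for all a ∈ ℝ. -/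

import Mathlib

open Metric Set ENNReal

/-- The δ-dimensional Hausdorff content of a set `E ⊆ ℝⁿ`: the infimum of `∑ rᵢ^δ`
over all countable covers of `E` by open balls `B(xᵢ, rᵢ)`. -/
noncomputable def hContent (n : ℕ) (δ : ℝ) (E : Set (EuclideanSpace ℝ (Fin n))) : ℝ≥0∞ :=
  ⨅ (c : ℕ → EuclideanSpace ℝ (Fin n)) (r : ℕ → NNReal)
    (_ : E ⊆ ⋃ i, Metric.ball (c i) (r i)), ∑' i, (r i : ℝ≥0∞) ^ δ

/-- The Choquet integral `∫_Ω f dH^δ_∞ = ∫_0^∞ H^δ_∞({x ∈ Ω : f x > t}) dt`. -/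
noncomputable def choquet (n : ℕ) (δ : ℝ) (Ω : Set (EuclideanSpace ℝ (Fin n)))
    (f : EuclideanSpace ℝ (Fin n) → ℝ≥0∞) : ℝ≥0∞ :=
  ∫⁻ t in Set.Ioi (0 : ℝ), hContent n δ {x | x ∈ Ω ∧ ENNReal.ofReal t < f x}

open MeasureTheory

section ChoquetQuasinormAux
variable {n : ℕ} {δ : ℝ}


lemma hContent_mono {A B : Set (EuclideanSpace ℝ (Fin n))} (h : A ⊆ B) :
    hContent n δ A ≤ hContent n δ B :=
  le_iInf fun c => le_iInf fun r => le_iInf fun hc =>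
    iInf_le_of_le c (iInf_le_of_le r (iInf_le_of_le (h.trans hc) le_rfl))

lemma hContent_empty (hδ : 0 < δ) : hContent n δ (∅ : Set (EuclideanSpace ℝ (Fin n))) = 0 := by
  refine le_antisymm ?_ zero_le
  have : hContent n δ ∅ ≤ ∑' _ : ℕ, ((0 : NNReal) : ℝ≥0∞) ^ δ :=
    iInf_le_of_le (fun _ => 0) (iInf_le_of_le (fun _ => 0)
      (iInf_le_of_le (empty_subset _) le_rfl))
  simpa [ENNReal.zero_rpow_of_pos hδ] using this

lemma hContent_iUnion_le (s : ℕ → Set (EuclideanSpace ℝ (Fin n))) :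
    hContent n δ (⋃ k, s k) ≤ ∑' k, hContent n δ (s k) := by
  refine ENNReal.le_of_forall_pos_le_add fun ε hε hfin => ?_
  obtain ⟨εk, hεkpos, hεksum⟩ := ENNReal.exists_pos_sum_of_countable
    (by exact_mod_cast hε.ne' : (ε : ℝ≥0∞) ≠ 0) ℕ
  have hchoice : ∀ k, ∃ (c : ℕ → EuclideanSpace ℝ (Fin n)) (r : ℕ → NNReal),
      (s k ⊆ ⋃ i, Metric.ball (c i) (r i)) ∧
      ∑' i, ((r i : ℝ≥0∞)) ^ δ ≤ hContent n δ (s k) + εk k := by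
    intro k
    have hne : hContent n δ (s k) ≠ ∞ := ne_top_of_le_ne_top hfin.ne (ENNReal.le_tsum k)
    have hlt : hContent n δ (s k) < hContent n δ (s k) + εk k :=
      ENNReal.lt_add_right hne (by exact_mod_cast (hεkpos k).ne')
    nth_rewrite 1 [hContent] at hlt
    simp only [iInf_lt_iff] at hlt
    obtain ⟨c, r, hcov, hlt⟩ := hlt
    exact ⟨c, r, hcov, hlt.le⟩
  choose c r hcov hsum using hchoice
  set e : ℕ ≃ ℕ × ℕ := (Denumerable.eqv (ℕ × ℕ)).symm with he
  have hcover : (⋃ k, s k) ⊆ ⋃ m, Metric.ball (c (e m).1 ((e m).2)) (r (e m).1 (e m).2) := by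
    intro x hx
    obtain ⟨k, hk⟩ := mem_iUnion.mp hx
    obtain ⟨i, hi⟩ := mem_iUnion.mp (hcov k hk)
    exact mem_iUnion.mpr ⟨e.symm (k, i), by simpa using hi⟩
  have hle : hContent n δ (⋃ k, s k) ≤ ∑' m, ((r (e m).1 (e m).2 : ℝ≥0∞)) ^ δ :=
    iInf_le_of_le _ (iInf_le_of_le _ (iInf_le_of_le hcover le_rfl))
  have htsum : ∑' m, ((r (e m).1 (e m).2 : ℝ≥0∞)) ^ δ
      = ∑' k, ∑' i, ((r k i : ℝ≥0∞)) ^ δ := by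
    rw [← ENNReal.tsum_prod]
    exact e.tsum_eq fun q => ((r q.1 q.2 : ℝ≥0∞)) ^ δ
  calc hContent n δ (⋃ k, s k) ≤ ∑' k, ∑' i, ((r k i : ℝ≥0∞)) ^ δ := htsum ▸ hle
    _ ≤ ∑' k, (hContent n δ (s k) + εk k) := ENNReal.tsum_le_tsum hsum
    _ = (∑' k, hContent n δ (s k)) + ∑' k, (εk k : ℝ≥0∞) := ENNReal.tsum_add
    _ ≤ (∑' k, hContent n δ (s k)) + ε := add_le_add le_rfl hεksum.le

lemma hContent_union_le (hδ : 0 < δ) (A B : Set (EuclideanSpace ℝ (Fin n))) :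
    hContent n δ (A ∪ B) ≤ hContent n δ A + hContent n δ B := by
  have h := hContent_iUnion_le (n := n) (δ := δ)
    (fun k => if k = 0 then A else if k = 1 then B else ∅)
  have hU : (⋃ k, (if k = 0 then A else if k = 1 then B else ∅)) = A ∪ B := by
    apply subset_antisymm
    · refine iUnion_subset fun k => ?_
      rcases k with _ | _ | k <;> simp
    · rintro x (h | h)
      · exact mem_iUnion.mpr ⟨0, by simpa⟩
      · exact mem_iUnion.mpr ⟨1, by simpa⟩
  have hsum : ∑' k : ℕ, hContent n δ (if k = 0 then A else if k = 1 then B else ∅)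
      = hContent n δ A + hContent n δ B := by
    rw [tsum_eq_sum (s := ({0, 1} : Finset ℕ)) ?_]
    · rw [Finset.sum_pair (by norm_num : (0:ℕ) ≠ 1)]
      simp
    · intro k hk
      simp only [Finset.mem_insert, Finset.mem_singleton, not_or] at hk
      simp [hk.1, hk.2, hContent_empty hδ]
  rw [hU, hsum] at h
  exact h

lemma lintegral_Ioi_comp_mul_left (c : ℝ) (hc : 0 < c) (F : ℝ → ℝ≥0∞) :
    ∫⁻ t in Set.Ioi (0 : ℝ), F (c * t) = ENNReal.ofReal c⁻¹ * ∫⁻ t in Set.Ioi (0 : ℝ), F t := by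
  let e : ℝ ≃ᵐ ℝ := (Homeomorph.mulLeft₀ c hc.ne').toMeasurableEquiv
  have h1 : ∫⁻ t in Set.Ioi (0 : ℝ), F (c * t)
      = ∫⁻ y, F y ∂(Measure.map e ((volume : Measure ℝ).restrict (Set.Ioi 0))) :=
    (MeasureTheory.lintegral_map_equiv F e).symm
  have hpre : (⇑e) ⁻¹' (Set.Ioi (0 : ℝ)) = Set.Ioi 0 := by
    show (fun x => c * x) ⁻¹' (Set.Ioi (0 : ℝ)) = Set.Ioi 0
    rw [preimage_const_mul_Ioi₀ _ hc]
    simp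
  have h2 : Measure.map e ((volume : Measure ℝ).restrict (Set.Ioi 0))
      = (Measure.map e volume).restrict (Set.Ioi 0) := by
    rw [Measure.restrict_map e.measurable measurableSet_Ioi, hpre]
  have h3 : Measure.map (⇑e) (volume : Measure ℝ) = ENNReal.ofReal |c⁻¹| • volume := by
    show Measure.map (c * ·) (volume : Measure ℝ) = ENNReal.ofReal |c⁻¹| • volume
    exact Real.map_volume_mul_left hc.ne'
  rw [h1, h2, h3, Measure.restrict_smul, lintegral_smul_measure,
    abs_of_pos (inv_pos.mpr hc), smul_eq_mul]


lemma levels_antitone (Ω : Set (EuclideanSpace ℝ (Fin n)))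
    (h : EuclideanSpace ℝ (Fin n) → ℝ≥0∞) :
    Antitone (fun t : ℝ => hContent n δ {x | x ∈ Ω ∧ ENNReal.ofReal t < h x}) :=
  fun t s hts => hContent_mono fun x hx =>
    ⟨hx.1, lt_of_le_of_lt (ENNReal.ofReal_le_ofReal hts) hx.2⟩

lemma choquet_const_mul (Ω : Set (EuclideanSpace ℝ (Fin n))) (K : ℝ) (hK : 0 < K)
    (h : EuclideanSpace ℝ (Fin n) → ℝ≥0∞) :
    choquet n δ Ω (fun x => ENNReal.ofReal K * h x) = ENNReal.ofReal K * choquet n δ Ω h := by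
  have hset : ∀ t : ℝ, {x | x ∈ Ω ∧ ENNReal.ofReal t < ENNReal.ofReal K * h x}
      = {x | x ∈ Ω ∧ ENNReal.ofReal (K⁻¹ * t) < h x} := by
    intro t
    ext x
    simp only [mem_setOf_eq, and_congr_right_iff]
    intro _
    rw [inv_mul_eq_div, ENNReal.ofReal_div_of_pos hK,
      ENNReal.div_lt_iff (Or.inl (ENNReal.ofReal_pos.mpr hK).ne')
        (Or.inl ENNReal.ofReal_ne_top), mul_comm]
  simp only [choquet, hset]
  have := lintegral_Ioi_comp_mul_left K⁻¹ (inv_pos.mpr hK)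
    (fun s => hContent n δ {x | x ∈ Ω ∧ ENNReal.ofReal s < h x})
  rw [inv_inv] at this
  exact this

lemma choquet_eq_zero_of_levels (Ω : Set (EuclideanSpace ℝ (Fin n)))
    (h : EuclideanSpace ℝ (Fin n) → ℝ≥0∞)
    (H : ∀ t : ℝ, 0 < t → hContent n δ {x | x ∈ Ω ∧ ENNReal.ofReal t < h x} = 0) :
    choquet n δ Ω h = 0 := by
  refine le_antisymm ?_ zero_le
  calc choquet n δ Ω h ≤ ∫⁻ _ in Set.Ioi (0 : ℝ), 0 :=
        setLIntegral_mono' measurableSet_Ioi fun t ht => le_of_eq (H t ht)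
    _ = 0 := by simp

lemma ereal_abs_add_le (x y : EReal) : (x + y).abs ≤ x.abs + y.abs := by
  induction x using EReal.rec with
  | bot => simp
  | top =>
    induction y using EReal.rec <;> simp
  | coe a =>
    induction y using EReal.rec with
    | bot => simp
    | top => simp
    | coe b =>
      rw [← EReal.coe_add, EReal.abs_def, EReal.abs_def, EReal.abs_def,
        ← ENNReal.ofReal_add (abs_nonneg _) (abs_nonneg _)]
      exact ENNReal.ofReal_le_ofReal (abs_add_le a b)

end ChoquetQuasinormAux

/-- The functional `‖f‖ = (∫_Ω |f|^p dH^δ_∞)^{1/p}` is a quasi-norm on functions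
`f : ℝⁿ → [-∞, ∞]` with finite Choquet `p`-integral: there is a constant `c ≥ 1` for the
quasi-triangle inequality; `‖f‖ = 0` iff `f = 0` `H^δ_∞`-almost everywhere on `Ω`;
and `‖a f‖ = |a| ‖f‖`. -/
theorem choquet_quasinorm (n : ℕ) (hn : 1 ≤ n) (δ : ℝ) (hδ0 : 0 < δ) (hδn : δ ≤ n)
    (p : ℝ) (hp : 1 ≤ p) (Ω : Set (EuclideanSpace ℝ (Fin n))) :
    (∃ c : ℝ≥0∞, 1 ≤ c ∧ c ≠ ∞ ∧
      ∀ f g : EuclideanSpace ℝ (Fin n) → EReal,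
        choquet n δ Ω (fun x => (f x).abs ^ p) < ∞ →
        choquet n δ Ω (fun x => (g x).abs ^ p) < ∞ →
        (choquet n δ Ω (fun x => ((f x + g x).abs) ^ p)) ^ (1 / p) ≤
          c * (choquet n δ Ω (fun x => (f x).abs ^ p)) ^ (1 / p) +
            c * (choquet n δ Ω (fun x => (g x).abs ^ p)) ^ (1 / p)) ∧
    (∀ f : EuclideanSpace ℝ (Fin n) → EReal,
      ((choquet n δ Ω (fun x => (f x).abs ^ p)) ^ (1 / p) = 0 ↔
        hContent n δ {x | x ∈ Ω ∧ f x ≠ 0} = 0)) ∧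
    (∀ (a : ℝ) (f : EuclideanSpace ℝ (Fin n) → EReal),
      (choquet n δ Ω (fun x => (((a : EReal) * f x).abs) ^ p)) ^ (1 / p) =
        ENNReal.ofReal |a| * (choquet n δ Ω (fun x => (f x).abs ^ p)) ^ (1 / p)) := by
  have hp0 : (0 : ℝ) < p := lt_of_lt_of_le zero_lt_one hp
  have hip0 : (0 : ℝ) < 1 / p := by positivity
  refine ⟨⟨2, one_le_two, ENNReal.ofNat_ne_top, ?_⟩, ?_, ?_⟩
  · -- quasi-triangle inequality
    intro f g _ _
    set A := choquet n δ Ω fun x => (f x).abs ^ p with hA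
    set B := choquet n δ Ω fun x => (g x).abs ^ p with hB
    set K := (2 : ℝ) ^ p with hKdef
    have hKpos : 0 < K := Real.rpow_pos_of_pos two_pos p
    have hKR : ((2 : ℝ≥0∞)) ^ p = ENNReal.ofReal K := by
      rw [hKdef, ← ENNReal.ofReal_rpow_of_pos two_pos]
      norm_num
    have hsub : ∀ t : ℝ, {x | x ∈ Ω ∧ ENNReal.ofReal t < ((f x + g x).abs) ^ p}
        ⊆ {x | x ∈ Ω ∧ ENNReal.ofReal (K⁻¹ * t) < (f x).abs ^ p}
          ∪ {x | x ∈ Ω ∧ ENNReal.ofReal (K⁻¹ * t) < (g x).abs ^ p} := by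
      intro t x hx
      obtain ⟨hxΩ, hxt⟩ := hx
      have habs : ((f x + g x).abs) ^ p
          ≤ ENNReal.ofReal K * max ((f x).abs ^ p) ((g x).abs ^ p) := by
        have h1 : (f x + g x).abs ≤ 2 * max (f x).abs (g x).abs :=
          calc (f x + g x).abs ≤ (f x).abs + (g x).abs := ereal_abs_add_le _ _
            _ ≤ max (f x).abs (g x).abs + max (f x).abs (g x).abs :=
                add_le_add (le_max_left _ _) (le_max_right _ _)
            _ = 2 * max (f x).abs (g x).abs := (two_mul _).symm
        calc ((f x + g x).abs) ^ p ≤ (2 * max (f x).abs (g x).abs) ^ p :=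
              ENNReal.rpow_le_rpow h1 hp0.le
          _ = (2 : ℝ≥0∞) ^ p * (max (f x).abs (g x).abs) ^ p :=
              ENNReal.mul_rpow_of_nonneg _ _ hp0.le
          _ = ENNReal.ofReal K * max ((f x).abs ^ p) ((g x).abs ^ p) := by
              rw [hKR]
              congr 1
              rcases le_total (f x).abs (g x).abs with h | h
              · rw [max_eq_right h, max_eq_right (ENNReal.rpow_le_rpow h hp0.le)]
              · rw [max_eq_left h, max_eq_left (ENNReal.rpow_le_rpow h hp0.le)]
      have hlt : ENNReal.ofReal (K⁻¹ * t) < max ((f x).abs ^ p) ((g x).abs ^ p) := by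
        rw [inv_mul_eq_div, ENNReal.ofReal_div_of_pos hKpos,
          ENNReal.div_lt_iff (Or.inl (ENNReal.ofReal_pos.mpr hKpos).ne')
            (Or.inl ENNReal.ofReal_ne_top), mul_comm]
        exact lt_of_lt_of_le hxt habs
      rcases lt_max_iff.mp hlt with h | h
      · exact Or.inl ⟨hxΩ, h⟩
      · exact Or.inr ⟨hxΩ, h⟩
    set F1 : ℝ → ℝ≥0∞ := fun s => hContent n δ {x | x ∈ Ω ∧ ENNReal.ofReal s < (f x).abs ^ p}
      with hF1def
    set F2 : ℝ → ℝ≥0∞ := fun s => hContent n δ {x | x ∈ Ω ∧ ENNReal.ofReal s < (g x).abs ^ p}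
      with hF2def
    have meas1 : Measurable fun t : ℝ => F1 (K⁻¹ * t) :=
      ((levels_antitone Ω _).measurable).comp (measurable_const_mul K⁻¹)
    have hmain : choquet n δ Ω (fun x => ((f x + g x).abs) ^ p)
        ≤ ENNReal.ofReal K * (A + B) := by
      have step1 : choquet n δ Ω (fun x => ((f x + g x).abs) ^ p)
          ≤ ∫⁻ t in Set.Ioi (0 : ℝ), (F1 (K⁻¹ * t) + F2 (K⁻¹ * t)) := by
        refine setLIntegral_mono' measurableSet_Ioi fun t _ => ?_
        exact le_trans (hContent_mono (hsub t)) (hContent_union_le hδ0 _ _)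
      have step2 : ∫⁻ t in Set.Ioi (0 : ℝ), (F1 (K⁻¹ * t) + F2 (K⁻¹ * t))
          = (∫⁻ t in Set.Ioi (0 : ℝ), F1 (K⁻¹ * t))
            + ∫⁻ t in Set.Ioi (0 : ℝ), F2 (K⁻¹ * t) :=
        lintegral_add_left meas1 _
      have e1 : ∫⁻ t in Set.Ioi (0 : ℝ), F1 (K⁻¹ * t) = ENNReal.ofReal K * A := by
        have h := lintegral_Ioi_comp_mul_left K⁻¹ (inv_pos.mpr hKpos) F1
        rw [inv_inv] at h
        rw [h, hA]
        rfl
      have e2 : ∫⁻ t in Set.Ioi (0 : ℝ), F2 (K⁻¹ * t) = ENNReal.ofReal K * B := by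
        have h := lintegral_Ioi_comp_mul_left K⁻¹ (inv_pos.mpr hKpos) F2
        rw [inv_inv] at h
        rw [h, hB]
        rfl
      calc choquet n δ Ω (fun x => ((f x + g x).abs) ^ p)
          ≤ _ := step1
        _ = ENNReal.ofReal K * A + ENNReal.ofReal K * B := by rw [step2, e1, e2]
        _ = ENNReal.ofReal K * (A + B) := (mul_add _ _ _).symm
    calc (choquet n δ Ω (fun x => ((f x + g x).abs) ^ p)) ^ (1 / p)
        ≤ (ENNReal.ofReal K * (A + B)) ^ (1 / p) := ENNReal.rpow_le_rpow hmain hip0.le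
      _ = (ENNReal.ofReal K) ^ (1 / p) * (A + B) ^ (1 / p) :=
          ENNReal.mul_rpow_of_nonneg _ _ hip0.le
      _ = 2 * (A + B) ^ (1 / p) := by
          congr 1
          rw [ENNReal.ofReal_rpow_of_pos hKpos, hKdef,
            ← Real.rpow_mul (by norm_num : (0:ℝ) ≤ 2), mul_one_div_cancel hp0.ne',
            Real.rpow_one]
          norm_num
      _ ≤ 2 * (A ^ (1 / p) + B ^ (1 / p)) := by
          refine mul_le_mul_right ?_ 2
          exact ENNReal.rpow_add_le_add_rpow A B hip0.le (by rw [div_le_one hp0]; exact hp)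
      _ = 2 * A ^ (1 / p) + 2 * B ^ (1 / p) := mul_add _ _ _
  · -- norm zero iff
    intro f
    have hiff : (choquet n δ Ω fun x => (f x).abs ^ p) ^ (1 / p) = 0
        ↔ (choquet n δ Ω fun x => (f x).abs ^ p) = 0 := by
      rw [ENNReal.rpow_eq_zero_iff]
      constructor
      · rintro (⟨h, -⟩ | ⟨-, h⟩)
        · exact h
        · exact absurd h (not_lt.mpr hip0.le)
      · exact fun h => Or.inl ⟨h, hip0⟩
    rw [hiff]
    set F : ℝ → ℝ≥0∞ := fun s => hContent n δ {x | x ∈ Ω ∧ ENNReal.ofReal s < (f x).abs ^ p}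
      with hFdef
    constructor
    · intro h0
      -- F t = 0 for all t > 0
      have hFzero : ∀ t : ℝ, 0 < t → F t = 0 := by
        intro t ht
        have hmeas : Measurable F := (levels_antitone Ω _).measurable
        have hae : F =ᵐ[(volume : Measure ℝ).restrict (Set.Ioi 0)] 0 :=
          (lintegral_eq_zero_iff hmeas).mp h0
        by_contra hFt
        have hsub2 : Set.Ioo (0 : ℝ) t ⊆ {s : ℝ | ¬ F s = 0} := by
          intro s hs
          have : F t ≤ F s := levels_antitone Ω _ hs.2.le
          intro hFs
          exact hFt (le_antisymm (hFs ▸ this) zero_le)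
        have hnull : (volume : Measure ℝ).restrict (Set.Ioi 0) {s : ℝ | ¬ F s = 0} = 0 := by
          have h' := ae_iff.mp hae
          simpa using h'
        have : (volume : Measure ℝ).restrict (Set.Ioi 0) (Set.Ioo 0 t) = 0 :=
          measure_mono_null hsub2 hnull
        rw [Measure.restrict_apply' measurableSet_Ioi,
          Set.inter_eq_self_of_subset_left Set.Ioo_subset_Ioi_self, Real.volume_Ioo,
          sub_zero] at this
        exact (ENNReal.ofReal_pos.mpr ht).ne' this
      have hcover : {x | x ∈ Ω ∧ f x ≠ 0}
          ⊆ ⋃ k : ℕ, {x | x ∈ Ω ∧ ENNReal.ofReal (((k : ℝ) + 1)⁻¹) < (f x).abs ^ p} := by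
        intro x hx
        have habs : (f x).abs ^ p ≠ 0 := by
          intro h
          rcases ENNReal.rpow_eq_zero_iff.mp h with ⟨h1, -⟩ | ⟨-, h2⟩
          · exact hx.2 (EReal.abs_eq_zero_iff.mp h1)
          · exact absurd h2 (not_lt.mpr hp0.le)
        obtain ⟨m, hm⟩ := ENNReal.exists_inv_nat_lt habs
        refine mem_iUnion.mpr ⟨m, hx.1, ?_⟩
        have h1 : ENNReal.ofReal (((m : ℝ) + 1)⁻¹) = (((m : ℕ) + 1 : ℝ≥0∞))⁻¹ := by
          rw [ENNReal.ofReal_inv_of_pos (by positivity)]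
          congr 1
          push_cast
          rw [ENNReal.ofReal_add (by positivity) zero_le_one]
          simp [ENNReal.ofReal_natCast]
        rw [h1]
        refine lt_of_le_of_lt ?_ hm
        exact ENNReal.inv_le_inv.mpr (by exact_mod_cast Nat.le_succ m)
      refine le_antisymm ?_ zero_le
      calc hContent n δ {x | x ∈ Ω ∧ f x ≠ 0}
          ≤ hContent n δ (⋃ k : ℕ, {x | x ∈ Ω ∧ ENNReal.ofReal (((k:ℝ)+1)⁻¹) < (f x).abs ^ p}) :=
            hContent_mono hcover
        _ ≤ ∑' k : ℕ, hContent n δ {x | x ∈ Ω ∧ ENNReal.ofReal (((k:ℝ)+1)⁻¹) < (f x).abs ^ p} :=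
            hContent_iUnion_le _
        _ = 0 := by
            have hz : ∀ k : ℕ,
                hContent n δ {x | x ∈ Ω ∧ ENNReal.ofReal (((k:ℝ)+1)⁻¹) < (f x).abs ^ p} = 0 :=
              fun k => hFzero _ (by positivity)
            simp [hz]
    · intro h0
      refine choquet_eq_zero_of_levels Ω _ fun t ht => ?_
      refine le_antisymm ?_ zero_le
      rw [← h0]
      refine hContent_mono fun x hx => ⟨hx.1, ?_⟩
      intro hfx
      have hlt := hx.2
      rw [hfx, EReal.abs_zero, ENNReal.zero_rpow_of_pos hp0] at hlt
      exact absurd hlt (by simp)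
  · -- homogeneity
    intro a f
    rcases eq_or_ne a 0 with rfl | ha
    · have hzero : (fun x => (((0:ℝ) : EReal) * f x).abs ^ p) = fun _ => (0 : ℝ≥0∞) := by
        funext x
        rw [EReal.coe_zero, zero_mul, EReal.abs_zero, ENNReal.zero_rpow_of_pos hp0]
      rw [hzero]
      have : choquet n δ Ω (fun _ => (0 : ℝ≥0∞)) = 0 := by
        refine choquet_eq_zero_of_levels Ω _ fun t ht => ?_
        have : {x | x ∈ Ω ∧ ENNReal.ofReal t < (0:ℝ≥0∞)} = (∅ : Set _) := by
          ext x; simp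
        rw [this]
        exact hContent_empty hδ0
      rw [this, ENNReal.zero_rpow_of_pos hip0]
      simp
    · have habs : 0 < |a| := abs_pos.mpr ha
      have hscale : (fun x => (((a : ℝ) : EReal) * f x).abs ^ p)
          = fun x => ENNReal.ofReal (|a| ^ p) * ((f x).abs ^ p) := by
        funext x
        rw [EReal.abs_mul, EReal.abs_def, ENNReal.mul_rpow_of_nonneg _ _ hp0.le,
          ENNReal.ofReal_rpow_of_pos habs]
      rw [hscale, choquet_const_mul Ω _ (Real.rpow_pos_of_pos habs p) _,
        ENNReal.mul_rpow_of_nonneg _ _ hip0.le]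
      congr 1
      rw [ENNReal.ofReal_rpow_of_pos (Real.rpow_pos_of_pos habs p),
        ← Real.rpow_mul habs.le, mul_one_div_cancel hp0.ne', Real.rpow_one]
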